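/- Let A be a finite planar point set in general position and let t : ℝ² → ℝ² be a projective transformation whose line sent to infinity is disjoint from A and separates A into two nonempty parts. Then at most 4 points of A are simultaneously extreme (vertices of the convex hull) in A and have extreme images in t(A). -/

import Mathlib

noncomputable section

abbrev E2 := EuclideanSpace ℝ (Fin 2)

/-- Homogeneous coordinates of a planar point. -/
def lift (x : E2) : Fin 3 → ℝ := ![x 0, x 1, 1]


lemma mulVec_lift (M : Matrix (Fin 3) (Fin 3) ℝ) (x : E2) (i : Fin 3) :
    M.mulVec (lift x) i = M i 0 * x 0 + M i 1 * x 1 + M i 2 := by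
  simp [Matrix.mulVec, dotProduct, Fin.sum_univ_three, lift]

lemma hull_pos (c0 c1 c2 : ℝ) (S : Set E2) (hS : ∀ a ∈ S, 0 < c0 * a 0 + c1 * a 1 + c2) :
    ∀ y ∈ convexHull ℝ S, 0 < c0 * y 0 + c1 * y 1 + c2 := by
  have hc : Convex ℝ {x : E2 | 0 < c0 * x 0 + c1 * x 1 + c2} := by
    intro x hx y hy a b ha hb hab
    simp only [Set.mem_setOf_eq, PiLp.add_apply, PiLp.smul_apply, smul_eq_mul] at *
    rcases eq_or_lt_of_le ha with rfl | ha'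
    · have hb1 : b = 1 := by linarith
      subst hb1; nlinarith
    · have hb' : b = 1 - a := by linarith
      subst hb'
      nlinarith [mul_pos ha' hx, mul_nonneg hb hy.le]
  exact fun y hy => convexHull_min hS hc hy

lemma decompE2 (f : E2 →L[ℝ] ℝ) (x : E2) :
    f x = x 0 * f (EuclideanSpace.single 0 (1:ℝ)) + x 1 * f (EuclideanSpace.single 1 (1:ℝ)) := by
  have hx : x = x 0 • (EuclideanSpace.single 0 (1:ℝ)) + x 1 • (EuclideanSpace.single 1 (1:ℝ)) := by
    ext i
    fin_cases i <;> simp [EuclideanSpace.single_apply]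
  conv_lhs => rw [hx]
  simp [map_add, map_smul, smul_eq_mul]

lemma fin4cases (i : Fin 4) : i = 0 ∨ i = 1 ∨ i = 2 ∨ i = 3 := by omega

lemma radon_absurd (c0 c1 c2 : ℝ) {S T : Set E2} {y : E2}
    (hy1 : y ∈ convexHull ℝ S) (hy2 : y ∈ convexHull ℝ T)
    (hS : ∀ a ∈ S, 0 < c0 * a 0 + c1 * a 1 + c2)
    (hT : ∀ a ∈ T, c0 * a 0 + c1 * a 1 + c2 < 0) : False := by
  have h1 := hull_pos c0 c1 c2 S hS y hy1
  have h2 := hull_pos (-c0) (-c1) (-c2) T (fun a ha => by have := hT a ha; linarith) y hy2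
  linarith

lemma t_inj (M : Matrix (Fin 3) (Fin 3) ℝ) (hM : IsUnit M.det) (t : E2 → E2)
    (ht : ∀ x : E2, M.mulVec (lift x) 2 ≠ 0 →
      (t x 0 = M.mulVec (lift x) 0 / M.mulVec (lift x) 2 ∧
       t x 1 = M.mulVec (lift x) 1 / M.mulVec (lift x) 2))
    {a p : E2} (ha : M.mulVec (lift a) 2 ≠ 0) (hp : M.mulVec (lift p) 2 ≠ 0)
    (h : t a = t p) : a = p := by
  obtain ⟨ha0, ha1⟩ := ht a ha
  obtain ⟨hp0, hp1⟩ := ht p hp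
  set va := M.mulVec (lift a) with hva
  set vp := M.mulVec (lift p) with hvp
  have key : M.mulVec (vp 2 • lift a) = M.mulVec (va 2 • lift p) := by
    rw [Matrix.mulVec_smul, Matrix.mulVec_smul, ← hva, ← hvp]
    funext i
    fin_cases i
    · have e0 : va 0 / va 2 = vp 0 / vp 2 := by rw [← ha0, ← hp0, h]
      simp only [Pi.smul_apply, smul_eq_mul]
      field_simp at e0
      show vp 2 * va 0 = va 2 * vp 0
      linarith
    · have e1 : va 1 / va 2 = vp 1 / vp 2 := by rw [← ha1, ← hp1, h]
      simp only [Pi.smul_apply, smul_eq_mul]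
      field_simp at e1
      show vp 2 * va 1 = va 2 * vp 1
      linarith
    · simp only [Pi.smul_apply, smul_eq_mul]
      show vp 2 * va 2 = va 2 * vp 2
      ring
  have hinj := Matrix.mulVec_injective_iff_isUnit.2 ((Matrix.isUnit_iff_isUnit_det M).2 hM) key
  have h2 : vp 2 * 1 = va 2 * 1 := by
    have := congrFun hinj 2
    simpa [lift, Pi.smul_apply, smul_eq_mul] using this
  have hvv : vp 2 = va 2 := by simpa using h2
  have h0 := congrFun hinj 0
  have h1 := congrFun hinj 1
  simp only [Pi.smul_apply, smul_eq_mul, lift] at h0 h1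
  have e0 : a 0 = p 0 := by
    have : vp 2 * a 0 = va 2 * p 0 := by simpa using h0
    rw [hvv] at this
    exact mul_left_cancel₀ ha this
  have e1 : a 1 = p 1 := by
    have : vp 2 * a 1 = va 2 * p 1 := by simpa using h1
    rw [hvv] at this
    exact mul_left_cancel₀ ha this
  ext i
  fin_cases i
  · exact e0
  · exact e1

lemma sep_source (A : Finset E2) (p : E2) (hp : p ∈ A)
    (hex : p ∈ Set.extremePoints ℝ (convexHull ℝ (A : Set E2))) :
    ∃ c0 c1 c2 : ℝ, (c0 * p 0 + c1 * p 1 + c2 < 0) ∧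
      ∀ a ∈ A, a ≠ p → 0 < c0 * a 0 + c1 * a 1 + c2 := by
  rw [(convex_convexHull ℝ (A : Set E2)).mem_extremePoints_iff_mem_diff_convexHull_diff] at hex
  have hnot : p ∉ convexHull ℝ ((A : Set E2) \ {p}) := by
    intro hmem
    exact hex.2 (convexHull_mono (Set.diff_subset_diff_left (subset_convexHull ℝ _)) hmem)
  have hcl : IsClosed (convexHull ℝ ((A : Set E2) \ {p})) :=
    A.finite_toSet.diff.isClosed_convexHull (𝕜 := ℝ)
  obtain ⟨f, u, hfp, hfb⟩ :=
    geometric_hahn_banach_point_closed (convex_convexHull ℝ _) hcl hnot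
  refine ⟨f (EuclideanSpace.single 0 (1:ℝ)), f (EuclideanSpace.single 1 (1:ℝ)), -u, ?_, ?_⟩
  · have := decompE2 f p
    linarith
  · intro a haA hane
    have hmem : a ∈ convexHull ℝ ((A : Set E2) \ {p}) :=
      subset_convexHull ℝ _ ⟨haA, by simpa using hane⟩
    have := hfb a hmem
    have hd := decompE2 f a
    linarith

lemma sep_image (A : Finset E2) (M : Matrix (Fin 3) (Fin 3) ℝ) (hM : IsUnit M.det)
    (t : E2 → E2)
    (ht : ∀ x : E2, M.mulVec (lift x) 2 ≠ 0 →
      (t x 0 = M.mulVec (lift x) 0 / M.mulVec (lift x) 2 ∧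
       t x 1 = M.mulVec (lift x) 1 / M.mulVec (lift x) 2))
    (hdisj : ∀ a ∈ A, M.mulVec (lift a) 2 ≠ 0)
    (p : E2) (hp : p ∈ A)
    (hex : t p ∈ Set.extremePoints ℝ (convexHull ℝ (t '' (A : Set E2)))) :
    ∃ c0 c1 c2 : ℝ,
      ((c0 * p 0 + c1 * p 1 + c2) * M.mulVec (lift p) 2 < 0) ∧
      ∀ a ∈ A, a ≠ p → 0 < (c0 * a 0 + c1 * a 1 + c2) * M.mulVec (lift a) 2 := by
  rw [(convex_convexHull ℝ _).mem_extremePoints_iff_mem_diff_convexHull_diff] at hex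
  have hsub : t '' ((A : Set E2) \ {p}) ⊆ convexHull ℝ (t '' (A : Set E2)) \ {t p} := by
    rintro _ ⟨a, ⟨haA, hane⟩, rfl⟩
    refine ⟨subset_convexHull ℝ _ ⟨a, haA, rfl⟩, ?_⟩
    simp only [Set.mem_singleton_iff]
    intro heq
    exact (by simpa using hane : a ≠ p) (t_inj M hM t ht (hdisj a haA) (hdisj p hp) heq)
  have hnot : t p ∉ convexHull ℝ (t '' ((A : Set E2) \ {p})) := by
    intro hmem
    exact hex.2 (convexHull_mono hsub hmem)
  have hcl : IsClosed (convexHull ℝ (t '' ((A : Set E2) \ {p}))) :=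
    (A.finite_toSet.diff.image t).isClosed_convexHull (𝕜 := ℝ)
  obtain ⟨f, u, hfp, hfb⟩ :=
    geometric_hahn_banach_point_closed (convex_convexHull ℝ _) hcl hnot
  set α := f (EuclideanSpace.single 0 (1:ℝ)) with hα
  set β := f (EuclideanSpace.single 1 (1:ℝ)) with hβ
  have key : ∀ x : E2, M.mulVec (lift x) 2 ≠ 0 →
      (α * M 0 0 + β * M 1 0 - u * M 2 0) * x 0 + (α * M 0 1 + β * M 1 1 - u * M 2 1) * x 1
        + (α * M 0 2 + β * M 1 2 - u * M 2 2) = (f (t x) - u) * M.mulVec (lift x) 2 := by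
    intro x hx
    obtain ⟨h0, h1⟩ := ht x hx
    have hfx : f (t x) = (t x 0) * α + (t x 1) * β := decompE2 f (t x)
    rw [hfx, h0, h1]
    rw [mulVec_lift, mulVec_lift, mulVec_lift] at *
    field_simp
    ring
  refine ⟨α * M 0 0 + β * M 1 0 - u * M 2 0,
          α * M 0 1 + β * M 1 1 - u * M 2 1,
          α * M 0 2 + β * M 1 2 - u * M 2 2, ?_, ?_⟩
  · have k := key p (hdisj p hp)
    rw [k]
    have hsq : 0 < M.mulVec (lift p) 2 * M.mulVec (lift p) 2 := mul_self_pos.2 (hdisj p hp)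
    nlinarith [hfp]
  · intro a haA hane
    have k := key a (hdisj a haA)
    rw [k]
    have hta : t a ∈ convexHull ℝ (t '' ((A : Set E2) \ {p})) :=
      subset_convexHull ℝ _ ⟨a, ⟨haA, by simpa using hane⟩, rfl⟩
    have := hfb (t a) hta
    have hsq : 0 < M.mulVec (lift a) 2 * M.mulVec (lift a) 2 := mul_self_pos.2 (hdisj a haA)
    nlinarith

lemma pos_of_mul_pos_pos {x y : ℝ} (h : 0 < x * y) (hy : 0 < y) : 0 < x := by nlinarith
lemma neg_of_mul_neg_pos {x y : ℝ} (h : x * y < 0) (hy : 0 < y) : x < 0 := by nlinarith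
lemma neg_of_mul_pos_neg {x y : ℝ} (h : 0 < x * y) (hy : y < 0) : x < 0 := by nlinarith

lemma aux3 (A : Finset E2) (M : Matrix (Fin 3) (Fin 3) ℝ) (hM : IsUnit M.det)
    (t : E2 → E2)
    (ht : ∀ x : E2, M.mulVec (lift x) 2 ≠ 0 →
      (t x 0 = M.mulVec (lift x) 0 / M.mulVec (lift x) 2 ∧
       t x 1 = M.mulVec (lift x) 1 / M.mulVec (lift x) 2))
    (hdisj : ∀ a ∈ A, M.mulVec (lift a) 2 ≠ 0)
    (hbex : ∃ b ∈ A, M.mulVec (lift b) 2 < 0)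
    (p q r : E2)
    (hpS : p ∈ A ∧ p ∈ Set.extremePoints ℝ (convexHull ℝ (A : Set E2)) ∧
        t p ∈ Set.extremePoints ℝ (convexHull ℝ (t '' (A : Set E2))))
    (hqS : q ∈ A ∧ q ∈ Set.extremePoints ℝ (convexHull ℝ (A : Set E2)) ∧
        t q ∈ Set.extremePoints ℝ (convexHull ℝ (t '' (A : Set E2))))
    (hrS : r ∈ A ∧ r ∈ Set.extremePoints ℝ (convexHull ℝ (A : Set E2)) ∧
        t r ∈ Set.extremePoints ℝ (convexHull ℝ (t '' (A : Set E2))))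
    (hpq : p ≠ q) (hpr : p ≠ r) (hqr : q ≠ r)
    (hp2 : 0 < M.mulVec (lift p) 2) (hq2 : 0 < M.mulVec (lift q) 2)
    (hr2 : 0 < M.mulVec (lift r) 2) : False := by
  obtain ⟨b, hbA, hbneg⟩ := hbex
  obtain ⟨hpA, hpE, hpE'⟩ := hpS
  obtain ⟨hqA, hqE, hqE'⟩ := hqS
  obtain ⟨hrA, hrE, hrE'⟩ := hrS
  have hpb : p ≠ b := fun h => by rw [h] at hp2; linarith
  have hqb : q ≠ b := fun h => by rw [h] at hq2; linarith
  have hrb : r ≠ b := fun h => by rw [h] at hr2; linarith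
  obtain ⟨gp0, gp1, gp2, hgp1, hgp2⟩ := sep_source A p hpA hpE
  obtain ⟨gq0, gq1, gq2, hgq1, hgq2⟩ := sep_source A q hqA hqE
  obtain ⟨gr0, gr1, gr2, hgr1, hgr2⟩ := sep_source A r hrA hrE
  obtain ⟨hp0, hp1, hp2c, hhp1, hhp2⟩ := sep_image A M hM t ht hdisj p hpA hpE'
  obtain ⟨hq0, hq1, hq2c, hhq1, hhq2⟩ := sep_image A M hM t ht hdisj q hqA hqE'
  obtain ⟨hr0, hr1, hr2c, hhr1, hhr2⟩ := sep_image A M hM t ht hdisj r hrA hrE'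
  -- values of Gp
  have vGp0 : gp0 * p 0 + gp1 * p 1 + gp2 < 0 := hgp1
  have vGp1 : 0 < gp0 * q 0 + gp1 * q 1 + gp2 := hgp2 q hqA (Ne.symm hpq)
  have vGp2 : 0 < gp0 * r 0 + gp1 * r 1 + gp2 := hgp2 r hrA (Ne.symm hpr)
  have vGp3 : 0 < gp0 * b 0 + gp1 * b 1 + gp2 := hgp2 b hbA (Ne.symm hpb)
  have vGq0 : 0 < gq0 * p 0 + gq1 * p 1 + gq2 := hgq2 p hpA hpq
  have vGq1 : gq0 * q 0 + gq1 * q 1 + gq2 < 0 := hgq1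
  have vGq2 : 0 < gq0 * r 0 + gq1 * r 1 + gq2 := hgq2 r hrA (Ne.symm hqr)
  have vGq3 : 0 < gq0 * b 0 + gq1 * b 1 + gq2 := hgq2 b hbA (Ne.symm hqb)
  have vGr0 : 0 < gr0 * p 0 + gr1 * p 1 + gr2 := hgr2 p hpA hpr
  have vGr1 : 0 < gr0 * q 0 + gr1 * q 1 + gr2 := hgr2 q hqA hqr
  have vGr2 : gr0 * r 0 + gr1 * r 1 + gr2 < 0 := hgr1
  have vGr3 : 0 < gr0 * b 0 + gr1 * b 1 + gr2 := hgr2 b hbA (Ne.symm hrb)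
  have vL0 : 0 < (M 2 0) * p 0 + (M 2 1) * p 1 + (M 2 2) := by
    rw [← mulVec_lift M p 2]; exact hp2
  have vL1 : 0 < (M 2 0) * q 0 + (M 2 1) * q 1 + (M 2 2) := by
    rw [← mulVec_lift M q 2]; exact hq2
  have vL2 : 0 < (M 2 0) * r 0 + (M 2 1) * r 1 + (M 2 2) := by
    rw [← mulVec_lift M r 2]; exact hr2
  have vL3 : (M 2 0) * b 0 + (M 2 1) * b 1 + (M 2 2) < 0 := by
    rw [← mulVec_lift M b 2]; exact hbneg
  have vHp0 : hp0 * p 0 + hp1 * p 1 + hp2c < 0 := neg_of_mul_neg_pos hhp1 hp2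
  have vHp1 : 0 < hp0 * q 0 + hp1 * q 1 + hp2c :=
    pos_of_mul_pos_pos (hhp2 q hqA (Ne.symm hpq)) hq2
  have vHp2 : 0 < hp0 * r 0 + hp1 * r 1 + hp2c :=
    pos_of_mul_pos_pos (hhp2 r hrA (Ne.symm hpr)) hr2
  have vHp3 : hp0 * b 0 + hp1 * b 1 + hp2c < 0 :=
    neg_of_mul_pos_neg (hhp2 b hbA (Ne.symm hpb)) hbneg
  have vHq0 : 0 < hq0 * p 0 + hq1 * p 1 + hq2c :=
    pos_of_mul_pos_pos (hhq2 p hpA hpq) hp2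
  have vHq1 : hq0 * q 0 + hq1 * q 1 + hq2c < 0 := neg_of_mul_neg_pos hhq1 hq2
  have vHq2 : 0 < hq0 * r 0 + hq1 * r 1 + hq2c :=
    pos_of_mul_pos_pos (hhq2 r hrA (Ne.symm hqr)) hr2
  have vHq3 : hq0 * b 0 + hq1 * b 1 + hq2c < 0 :=
    neg_of_mul_pos_neg (hhq2 b hbA (Ne.symm hqb)) hbneg
  have vHr0 : 0 < hr0 * p 0 + hr1 * p 1 + hr2c :=
    pos_of_mul_pos_pos (hhr2 p hpA hpr) hp2
  have vHr1 : 0 < hr0 * q 0 + hr1 * q 1 + hr2c :=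
    pos_of_mul_pos_pos (hhr2 q hqA hqr) hq2
  have vHr2 : hr0 * r 0 + hr1 * r 1 + hr2c < 0 := neg_of_mul_neg_pos hhr1 hr2
  have vHr3 : hr0 * b 0 + hr1 * b 1 + hr2c < 0 :=
    neg_of_mul_pos_neg (hhr2 b hbA (Ne.symm hrb)) hbneg
  have hnotindep : ¬ AffineIndependent ℝ (![p,q,r,b] : Fin 4 → E2) := by
    intro hind
    have hcard := hind.finrank_vectorSpan_add_one
    have hle : Module.finrank ℝ (vectorSpan ℝ (Set.range (![p,q,r,b] : Fin 4 → E2))) ≤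
        Module.finrank ℝ E2 := Submodule.finrank_le _
    rw [finrank_euclideanSpace_fin] at hle
    simp only [Fintype.card_fin] at hcard
    omega
  obtain ⟨I, y, hy1, hy2⟩ := Convex.radon_partition hnotindep
  by_cases h0 : (0 : Fin 4) ∈ I <;> by_cases h1 : (1 : Fin 4) ∈ I <;>
    by_cases h2 : (2 : Fin 4) ∈ I <;> by_cases h3 : (3 : Fin 4) ∈ I
  · have hemp : (![p,q,r,b] : Fin 4 → E2) '' Iᶜ = ∅ := by
      ext z
      simp only [Set.mem_image, Set.mem_empty_iff_false, iff_false, not_exists]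
      rintro i ⟨hi, rfl⟩
      rcases fin4cases i with rfl | rfl | rfl | rfl <;> [exact hi h0; exact hi h1; exact hi h2; exact hi h3]
    rw [hemp, convexHull_empty] at hy2
    exact hy2
  · exact radon_absurd (M 2 0) (M 2 1) (M 2 2) hy1 hy2
      (by
        rintro z ⟨i, hi, rfl⟩
        rcases fin4cases i with rfl | rfl | rfl | rfl
        · simpa using vL0
        · simpa using vL1
        · simpa using vL2
        · exact absurd hi h3)
      (by
        rintro z ⟨i, hi, rfl⟩
        rcases fin4cases i with rfl | rfl | rfl | rfl
        · exact absurd h0 hi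
        · exact absurd h1 hi
        · exact absurd h2 hi
        · simpa using vL3)
  · exact radon_absurd gr0 gr1 gr2 hy1 hy2
      (by
        rintro z ⟨i, hi, rfl⟩
        rcases fin4cases i with rfl | rfl | rfl | rfl
        · simpa using vGr0
        · simpa using vGr1
        · exact absurd hi h2
        · simpa using vGr3)
      (by
        rintro z ⟨i, hi, rfl⟩
        rcases fin4cases i with rfl | rfl | rfl | rfl
        · exact absurd h0 hi
        · exact absurd h1 hi
        · simpa using vGr2
        · exact absurd h3 hi)
  · exact radon_absurd hr0 hr1 hr2c hy1 hy2
      (by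
        rintro z ⟨i, hi, rfl⟩
        rcases fin4cases i with rfl | rfl | rfl | rfl
        · simpa using vHr0
        · simpa using vHr1
        · exact absurd hi h2
        · exact absurd hi h3)
      (by
        rintro z ⟨i, hi, rfl⟩
        rcases fin4cases i with rfl | rfl | rfl | rfl
        · exact absurd h0 hi
        · exact absurd h1 hi
        · simpa using vHr2
        · simpa using vHr3)
  · exact radon_absurd gq0 gq1 gq2 hy1 hy2
      (by
        rintro z ⟨i, hi, rfl⟩
        rcases fin4cases i with rfl | rfl | rfl | rfl
        · simpa using vGq0
        · exact absurd hi h1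
        · simpa using vGq2
        · simpa using vGq3)
      (by
        rintro z ⟨i, hi, rfl⟩
        rcases fin4cases i with rfl | rfl | rfl | rfl
        · exact absurd h0 hi
        · simpa using vGq1
        · exact absurd h2 hi
        · exact absurd h3 hi)
  · exact radon_absurd hq0 hq1 hq2c hy1 hy2
      (by
        rintro z ⟨i, hi, rfl⟩
        rcases fin4cases i with rfl | rfl | rfl | rfl
        · simpa using vHq0
        · exact absurd hi h1
        · simpa using vHq2
        · exact absurd hi h3)
      (by
        rintro z ⟨i, hi, rfl⟩
        rcases fin4cases i with rfl | rfl | rfl | rfl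
        · exact absurd h0 hi
        · simpa using vHq1
        · exact absurd h2 hi
        · simpa using vHq3)
  · exact radon_absurd hp0 hp1 hp2c hy2 hy1
      (by
        rintro z ⟨i, hi, rfl⟩
        rcases fin4cases i with rfl | rfl | rfl | rfl
        · exact absurd h0 hi
        · simpa using vHp1
        · simpa using vHp2
        · exact absurd h3 hi)
      (by
        rintro z ⟨i, hi, rfl⟩
        rcases fin4cases i with rfl | rfl | rfl | rfl
        · simpa using vHp0
        · exact absurd hi h1
        · exact absurd hi h2
        · simpa using vHp3)
  · exact radon_absurd gp0 gp1 gp2 hy2 hy1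
      (by
        rintro z ⟨i, hi, rfl⟩
        rcases fin4cases i with rfl | rfl | rfl | rfl
        · exact absurd h0 hi
        · simpa using vGp1
        · simpa using vGp2
        · simpa using vGp3)
      (by
        rintro z ⟨i, hi, rfl⟩
        rcases fin4cases i with rfl | rfl | rfl | rfl
        · simpa using vGp0
        · exact absurd hi h1
        · exact absurd hi h2
        · exact absurd hi h3)
  · exact radon_absurd gp0 gp1 gp2 hy1 hy2
      (by
        rintro z ⟨i, hi, rfl⟩
        rcases fin4cases i with rfl | rfl | rfl | rfl
        · exact absurd hi h0
        · simpa using vGp1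
        · simpa using vGp2
        · simpa using vGp3)
      (by
        rintro z ⟨i, hi, rfl⟩
        rcases fin4cases i with rfl | rfl | rfl | rfl
        · simpa using vGp0
        · exact absurd h1 hi
        · exact absurd h2 hi
        · exact absurd h3 hi)
  · exact radon_absurd hp0 hp1 hp2c hy1 hy2
      (by
        rintro z ⟨i, hi, rfl⟩
        rcases fin4cases i with rfl | rfl | rfl | rfl
        · exact absurd hi h0
        · simpa using vHp1
        · simpa using vHp2
        · exact absurd hi h3)
      (by
        rintro z ⟨i, hi, rfl⟩
        rcases fin4cases i with rfl | rfl | rfl | rfl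
        · simpa using vHp0
        · exact absurd h1 hi
        · exact absurd h2 hi
        · simpa using vHp3)
  · exact radon_absurd hq0 hq1 hq2c hy2 hy1
      (by
        rintro z ⟨i, hi, rfl⟩
        rcases fin4cases i with rfl | rfl | rfl | rfl
        · simpa using vHq0
        · exact absurd h1 hi
        · simpa using vHq2
        · exact absurd h3 hi)
      (by
        rintro z ⟨i, hi, rfl⟩
        rcases fin4cases i with rfl | rfl | rfl | rfl
        · exact absurd hi h0
        · simpa using vHq1
        · exact absurd hi h2
        · simpa using vHq3)
  · exact radon_absurd gq0 gq1 gq2 hy2 hy1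
      (by
        rintro z ⟨i, hi, rfl⟩
        rcases fin4cases i with rfl | rfl | rfl | rfl
        · simpa using vGq0
        · exact absurd h1 hi
        · simpa using vGq2
        · simpa using vGq3)
      (by
        rintro z ⟨i, hi, rfl⟩
        rcases fin4cases i with rfl | rfl | rfl | rfl
        · exact absurd hi h0
        · simpa using vGq1
        · exact absurd hi h2
        · exact absurd hi h3)
  · exact radon_absurd hr0 hr1 hr2c hy2 hy1
      (by
        rintro z ⟨i, hi, rfl⟩
        rcases fin4cases i with rfl | rfl | rfl | rfl
        · simpa using vHr0
        · simpa using vHr1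
        · exact absurd h2 hi
        · exact absurd h3 hi)
      (by
        rintro z ⟨i, hi, rfl⟩
        rcases fin4cases i with rfl | rfl | rfl | rfl
        · exact absurd hi h0
        · exact absurd hi h1
        · simpa using vHr2
        · simpa using vHr3)
  · exact radon_absurd gr0 gr1 gr2 hy2 hy1
      (by
        rintro z ⟨i, hi, rfl⟩
        rcases fin4cases i with rfl | rfl | rfl | rfl
        · simpa using vGr0
        · simpa using vGr1
        · exact absurd h2 hi
        · simpa using vGr3)
      (by
        rintro z ⟨i, hi, rfl⟩
        rcases fin4cases i with rfl | rfl | rfl | rfl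
        · exact absurd hi h0
        · exact absurd hi h1
        · simpa using vGr2
        · exact absurd hi h3)
  · exact radon_absurd (M 2 0) (M 2 1) (M 2 2) hy2 hy1
      (by
        rintro z ⟨i, hi, rfl⟩
        rcases fin4cases i with rfl | rfl | rfl | rfl
        · simpa using vL0
        · simpa using vL1
        · simpa using vL2
        · exact absurd h3 hi)
      (by
        rintro z ⟨i, hi, rfl⟩
        rcases fin4cases i with rfl | rfl | rfl | rfl
        · exact absurd hi h0
        · exact absurd hi h1
        · exact absurd hi h2
        · simpa using vL3)
  · have hemp : (![p,q,r,b] : Fin 4 → E2) '' I = ∅ := by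
      ext z
      simp only [Set.mem_image, Set.mem_empty_iff_false, iff_false, not_exists]
      rintro i ⟨hi, rfl⟩
      rcases fin4cases i with rfl | rfl | rfl | rfl <;> [exact h0 hi; exact h1 hi; exact h2 hi; exact h3 hi]
    rw [hemp, convexHull_empty] at hy1
    exact hy1

/-- Let `A` be a finite planar point set in general position and `t` a
projective transform (induced by an invertible 3×3 matrix `M` on homogeneous coordinates)
whose line sent to infinity misses `A` and splits `A`. Then at most `4` points of `A` are
extreme in `A` and have extreme images in `t '' A`. -/
theorem stmt3 (A : Finset E2)
    (hgp : ∀ a ∈ A, ∀ b ∈ A, ∀ c ∈ A, a ≠ b → a ≠ c → b ≠ c →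
      ¬ Collinear ℝ ({a, b, c} : Set E2))
    (M : Matrix (Fin 3) (Fin 3) ℝ) (hM : IsUnit M.det)
    (t : E2 → E2)
    -- `t` is the projective transform associated with `M`, defined wherever the third
    -- homogeneous coordinate of the image does not vanish:
    (ht : ∀ x : E2, M.mulVec (lift x) 2 ≠ 0 →
      (t x 0 = M.mulVec (lift x) 0 / M.mulVec (lift x) 2 ∧
       t x 1 = M.mulVec (lift x) 1 / M.mulVec (lift x) 2))
    -- the line sent to infinity is disjoint from `A`:
    (hdisj : ∀ a ∈ A, M.mulVec (lift a) 2 ≠ 0)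
    -- and splits `A` into two nonempty parts:
    (hsplit : (∃ a ∈ A, 0 < M.mulVec (lift a) 2) ∧ (∃ b ∈ A, M.mulVec (lift b) 2 < 0)) :
    {p : E2 | p ∈ A ∧ p ∈ Set.extremePoints ℝ (convexHull ℝ (A : Set E2)) ∧
        t p ∈ Set.extremePoints ℝ (convexHull ℝ (t '' (A : Set E2)))}.ncard ≤ 4 := by
  classical
  set S : Set E2 := {p : E2 | p ∈ A ∧ p ∈ Set.extremePoints ℝ (convexHull ℝ (A : Set E2)) ∧
        t p ∈ Set.extremePoints ℝ (convexHull ℝ (t '' (A : Set E2)))} with hSdef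
  have hSsub : S ⊆ (A : Set E2) := fun p hp => hp.1
  have hfin : S.Finite := A.finite_toSet.subset hSsub
  have hcover : S = {p ∈ S | 0 < M.mulVec (lift p) 2} ∪ {p ∈ S | M.mulVec (lift p) 2 < 0} := by
    ext p
    constructor
    · intro hp
      rcases (hdisj p hp.1).lt_or_gt with h | h
      · exact Or.inr ⟨hp, h⟩
      · exact Or.inl ⟨hp, h⟩
    · rintro (⟨hp, _⟩ | ⟨hp, _⟩) <;> exact hp
  have hposb : {p ∈ S | 0 < M.mulVec (lift p) 2}.ncard ≤ 2 := by
    by_contra hcon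
    push_neg at hcon
    rw [Set.two_lt_ncard (hfin.subset (Set.sep_subset _ _))] at hcon
    obtain ⟨p, hp, q, hq, r, hr, hpq, hpr, hqr⟩ := hcon
    exact aux3 A M hM t ht hdisj hsplit.2 p q r hp.1 hq.1 hr.1 hpq hpr hqr hp.2 hq.2 hr.2
  have hnegb : {p ∈ S | M.mulVec (lift p) 2 < 0}.ncard ≤ 2 := by
    by_contra hcon
    push_neg at hcon
    rw [Set.two_lt_ncard (hfin.subset (Set.sep_subset _ _))] at hcon
    obtain ⟨p, hp, q, hq, r, hr, hpq, hpr, hqr⟩ := hcon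
    have hneg2 : ∀ x : E2, (-M).mulVec (lift x) = -(M.mulVec (lift x)) := fun x =>
      Matrix.neg_mulVec _ _
    have hM' : IsUnit (-M).det := by
      rw [Matrix.det_neg]
      simp only [Fintype.card_fin]
      norm_num
      exact hM.ne_zero
    have ht' : ∀ x : E2, (-M).mulVec (lift x) 2 ≠ 0 →
        (t x 0 = (-M).mulVec (lift x) 0 / (-M).mulVec (lift x) 2 ∧
         t x 1 = (-M).mulVec (lift x) 1 / (-M).mulVec (lift x) 2) := by
      intro x hx
      rw [hneg2] at hx ⊢
      simp only [Pi.neg_apply] at hx ⊢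
      have hx' : M.mulVec (lift x) 2 ≠ 0 := fun h => hx (by rw [h]; ring)
      obtain ⟨h0, h1⟩ := ht x hx'
      rw [neg_div_neg_eq, neg_div_neg_eq]
      exact ⟨h0, h1⟩
    have hdisj' : ∀ a ∈ A, (-M).mulVec (lift a) 2 ≠ 0 := by
      intro a ha
      rw [hneg2]
      simp only [Pi.neg_apply, ne_eq, neg_eq_zero]
      exact hdisj a ha
    have hbex' : ∃ b ∈ A, (-M).mulVec (lift b) 2 < 0 := by
      obtain ⟨a, haA, hapos⟩ := hsplit.1
      exact ⟨a, haA, by rw [hneg2]; simpa using hapos⟩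
    have hsign : ∀ x : E2, M.mulVec (lift x) 2 < 0 → 0 < (-M).mulVec (lift x) 2 := by
      intro x hx
      rw [hneg2]
      simpa using hx
    exact aux3 A (-M) hM' t ht' hdisj' hbex' p q r hp.1 hq.1 hr.1 hpq hpr hqr
      (hsign p hp.2) (hsign q hq.2) (hsign r hr.2)
  have hun := Set.ncard_union_le {p ∈ S | 0 < M.mulVec (lift p) 2}
    {p ∈ S | M.mulVec (lift p) 2 < 0}
  rw [← hcover] at hun
  omega
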